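/- Every cubic graph admits a valid factor. -/
import Mathlib


open SimpleGraph

/-- A cubic graph: every vertex has degree 3. -/
def IsCubic {V : Type*} [Fintype V] (G : SimpleGraph V) : Prop :=
  ∀ v : V, Nat.card (G.neighborSet v) = 3

/-- A circular nowhere-zero `r`-flow: an orientation `dir` of `G` together with
a flow value `f` on each directed edge, with values in `[1, r-1]` and flow
conservation at every vertex. -/
structure CNZF {V : Type*} [Fintype V] (G : SimpleGraph V) (r : ℝ) where
  dir : V → V → Bool
  f : V → V → ℝ
  orients : ∀ u v, G.Adj u v ↔ (dir u v = true ∨ dir v u = true)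
  asymm : ∀ u v, dir u v = true → dir v u = false
  lb : ∀ u v, dir u v = true → 1 ≤ f u v
  ub : ∀ u v, dir u v = true → f u v ≤ r - 1
  conserv : ∀ v : V, (∑ u : V, if dir v u = true then f v u else 0)
      = ∑ u : V, if dir u v = true then f u v else 0

/-- Out-degree of a vertex in an orientation. -/
noncomputable def outDeg {V : Type*} (dir : V → V → Bool) (v : V) : ℕ :=
  Nat.card {u | dir v u = true}

/-- Every connected component of the subgraph induced by `S` is a tree
on at most `m` vertices. -/
def MonoOK {V : Type*} (G : SimpleGraph V) (m : ℕ) (S : Set V) : Prop :=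
  (G.induce S).IsAcyclic ∧
    ∀ c : (G.induce S).ConnectedComponent, Nat.card c.supp ≤ m

/-- A `k`-weak bisection, given by its first part `S`. -/
def IsWeakBisection {V : Type*} [Fintype V] (G : SimpleGraph V) (k : ℕ) (S : Set V) : Prop :=
  Nat.card S = Nat.card (Sᶜ : Set V) ∧ MonoOK G (k-2) S ∧ MonoOK G (k-2) (Sᶜ : Set V)

/-- Every monochromatic component of the 2-coloring `c` has at most `m` vertices. -/
def MonoAtMost {V : Type*} (G : SimpleGraph V) (c : V → Bool) (m : ℕ) : Prop :=
  ∀ b : Bool, ∀ comp : (G.induce {v | c v = b}).ConnectedComponent,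
    Nat.card comp.supp ≤ m

/-- Edges of `L_k` (on vertex labels `0, …, 5+2k`): `L_0` is `K_{3,3}` minus an
edge (parts `{0,1,4}` and `{2,3,5}`, edge `45` removed, degree-2 vertices `4,5`);
at step `j` the two new adjacent vertices `4+2j, 5+2j` are attached to the
previous degree-2 vertices `2+2j, 3+2j`. The degree-2 vertices of `L_k` are
`4+2k` and `5+2k`. -/
def LEdge (k : ℕ) (a b : ℕ) : Prop :=
  (a, b) ∈ ({(0,2),(0,3),(0,5),(1,2),(1,3),(1,5),(4,2),(4,3)} : Set (ℕ × ℕ)) ∨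
  ∃ j, 1 ≤ j ∧ j ≤ k ∧
    ((a, b) = (4+2*j, 5+2*j) ∨ (a, b) = (2+2*j, 4+2*j) ∨ (a, b) = (3+2*j, 5+2*j))

/-- The graph `L_k`. -/
def Lgraph (k : ℕ) : SimpleGraph (Fin (6+2*k)) :=
  SimpleGraph.fromRel (fun a b => LEdge k a.val b.val)

/-- Edges of `T_k`: one copy of `L'_k` (the copy of `L_k` on `0..5+2k` with apex
`6+2k`), two copies of `L'_0` (on `7+2k..12+2k` with apex `13+2k`, and on
`14+2k..19+2k` with apex `20+2k`), and a central vertex `21+2k` adjacent to the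
three apexes. -/
def TEdge (k : ℕ) (a b : ℕ) : Prop :=
  LEdge k a b
  ∨ (a = 6+2*k ∧ (b = 4+2*k ∨ b = 5+2*k))
  ∨ (∃ a' b', LEdge 0 a' b' ∧ a = 7+2*k+a' ∧ b = 7+2*k+b')
  ∨ (a = 13+2*k ∧ (b = 11+2*k ∨ b = 12+2*k))
  ∨ (∃ a' b', LEdge 0 a' b' ∧ a = 14+2*k+a' ∧ b = 14+2*k+b')
  ∨ (a = 20+2*k ∧ (b = 18+2*k ∨ b = 19+2*k))
  ∨ (a = 21+2*k ∧ (b = 6+2*k ∨ b = 13+2*k ∨ b = 20+2*k))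

/-- The cubic graph `T_k`. -/
def Tgraph (k : ℕ) : SimpleGraph (Fin (22+2*k)) :=
  SimpleGraph.fromRel (fun a b => TEdge k a.val b.val)

/-- A valid factor of `G`: a spanning subgraph all of whose components are paths
or cycles (equivalently, all degrees are 1 or 2), such that the two endpoints
(degree-1 vertices) of every odd component are non-adjacent in `G`; in particular
no component is an isolated vertex. -/
def IsValidFactor {V : Type*} (G H : SimpleGraph V) : Prop :=
  H ≤ G ∧
  (∀ v : V, 1 ≤ Nat.card (H.neighborSet v) ∧ Nat.card (H.neighborSet v) ≤ 2) ∧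
  ∀ c : H.ConnectedComponent, Odd (Nat.card c.supp) →
    ∀ u v : V, u ∈ c.supp → v ∈ c.supp → u ≠ v →
      Nat.card (H.neighborSet u) = 1 → Nat.card (H.neighborSet v) = 1 → ¬ G.Adj u v

/-- A component of `H` is a cycle iff all its vertices have degree 2 in `H`. -/
def IsCycleComp {V : Type*} (H : SimpleGraph V) (c : H.ConnectedComponent) : Prop :=
  ∀ v ∈ c.supp, Nat.card (H.neighborSet v) = 2

/-- An odd cycle component. -/
def OddCycleComp {V : Type*} (H : SimpleGraph V) (c : H.ConnectedComponent) : Prop :=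
  Odd (Nat.card c.supp) ∧ IsCycleComp H c

/-- An odd path component (a component with an odd number of vertices containing
a degree-1 vertex). -/
def OddPathComp {V : Type*} (H : SimpleGraph V) (c : H.ConnectedComponent) : Prop :=
  Odd (Nat.card c.supp) ∧ ∃ v ∈ c.supp, Nat.card (H.neighborSet v) = 1

noncomputable def numComponents {V : Type*} (H : SimpleGraph V) : ℕ := Nat.card H.ConnectedComponent

noncomputable def numOddCycles {V : Type*} (H : SimpleGraph V) : ℕ :=
  Nat.card {c : H.ConnectedComponent // OddCycleComp H c}

/-- `H` is a valid factor of `G` with the minimum number of components. -/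
def MinimizesComponents {V : Type*} (G H : SimpleGraph V) : Prop :=
  IsValidFactor G H ∧ ∀ H' : SimpleGraph V, IsValidFactor G H' →
    numComponents H ≤ numComponents H'

/-- `H` is a valid factor of `G` minimizing the number of components and,
subject to that, the number of odd cycles. -/
def IsMinValidFactor {V : Type*} (G H : SimpleGraph V) : Prop :=
  MinimizesComponents G H ∧
  ∀ H' : SimpleGraph V, IsValidFactor G H' →
    numComponents H' = numComponents H → numOddCycles H ≤ numOddCycles H'

/-- An external vertex of a factor: an endpoint of a path component, or a vertex
of an odd cycle component. -/
def ExternalVtx {V : Type*} (H : SimpleGraph V) (v : V) : Prop :=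
  Nat.card (H.neighborSet v) = 1 ∨ OddCycleComp H (H.connectedComponentMk v)

/-- Every cubic graph admits a valid factor. -/
theorem stmt8 {V : Type*} [Fintype V] (G : SimpleGraph V) (hG : IsCubic G) :
    ∃ H : SimpleGraph V, IsValidFactor G H := by
  classical
  haveI : DecidableEq V := Classical.decEq V
  haveI : DecidableRel G.Adj := Classical.decRel _
  -- degrees as finsets
  have hdeg : ∀ v, (G.neighborFinset v).card = 3 := by
    intro v
    have := hG v
    rwa [Nat.card_eq_fintype_card, ← Set.toFinset_card, ← neighborFinset_def] at this
  -- Hall's condition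
  have hall : ∀ s : Finset V, s.card ≤ (s.biUnion (fun v => G.neighborFinset v)).card := by
    intro s
    set B := s.biUnion (fun v => G.neighborFinset v) with hB
    have key : 3 * s.card ≤ 3 * B.card := by
      calc 3 * s.card = ∑ v ∈ s, (G.neighborFinset v).card := by
            rw [Finset.sum_congr rfl (fun v _ => hdeg v)]
            simp [Finset.sum_const, Nat.mul_comm]
        _ = ∑ v ∈ s, (B.filter (fun u => G.Adj v u)).card := by
            refine Finset.sum_congr rfl (fun v hv => ?_)
            congr 1
            ext u
            simp only [Finset.mem_filter, mem_neighborFinset, hB, Finset.mem_biUnion]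
            constructor
            · intro h; exact ⟨⟨v, hv, h⟩, h⟩
            · exact fun h => h.2
        _ = ∑ v ∈ s, ∑ u ∈ B, (if G.Adj v u then 1 else 0) := by
            refine Finset.sum_congr rfl (fun v _ => ?_)
            rw [Finset.card_filter]
        _ = ∑ u ∈ B, ∑ v ∈ s, (if G.Adj v u then 1 else 0) := Finset.sum_comm
        _ = ∑ u ∈ B, (s.filter (fun v => G.Adj v u)).card := by
            refine Finset.sum_congr rfl (fun u _ => ?_)
            rw [Finset.card_filter]
        _ ≤ ∑ u ∈ B, 3 := by
            refine Finset.sum_le_sum (fun u _ => ?_)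
            calc (s.filter (fun v => G.Adj v u)).card
                ≤ (G.neighborFinset u).card := by
                  apply Finset.card_le_card
                  intro v hv
                  rw [mem_neighborFinset]
                  exact ((Finset.mem_filter.mp hv).2).symm
              _ = 3 := hdeg u
        _ = 3 * B.card := by rw [Finset.sum_const]; ring
    omega
  obtain ⟨f, hinj, hf⟩ :=
    (Finset.all_card_le_biUnion_card_iff_exists_injective (fun v => G.neighborFinset v)).mp hall
  have hadjf : ∀ v, G.Adj v (f v) := fun v => (mem_neighborFinset G v (f v)).mp (hf v)
  have hfne : ∀ v, f v ≠ v := fun v => fun h => G.irrefl (h ▸ hadjf v)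
  -- f is bijective
  have hbij : Function.Bijective f := Finite.injective_iff_bijective.mp hinj
  obtain ⟨g, hgf, hfg⟩ := Function.bijective_iff_has_inverse.mp hbij
  -- the factor
  set H : SimpleGraph V := SimpleGraph.fromRel (fun a b => f a = b) with hH
  have hadj : ∀ a b, H.Adj a b ↔ a ≠ b ∧ (f a = b ∨ f b = a) := by
    intro a b; rw [hH, fromRel_adj]
  -- neighbor sets
  have hnbr : ∀ v, H.neighborSet v = {f v, g v} := by
    intro v
    ext u
    simp only [mem_neighborSet, hadj, Set.mem_insert_iff, Set.mem_singleton_iff]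
    constructor
    · rintro ⟨hne, h | h⟩
      · exact Or.inl h.symm
      · right; rw [← h, hgf]
    · rintro (h | h)
      · exact ⟨fun he => hfne v (he ▸ h.symm), Or.inl h.symm⟩
      · subst h
        refine ⟨fun he => hfne (g v) ?_, Or.inr (hfg v)⟩
        · rw [hfg]; exact he
  have hcard : ∀ v, 1 ≤ Nat.card (H.neighborSet v) ∧ Nat.card (H.neighborSet v) ≤ 2 := by
    intro v
    rw [hnbr v, Nat.card_coe_set_eq]
    constructor
    · exact (Set.ncard_pos (Set.toFinite _)).mpr ⟨f v, Set.mem_insert _ _⟩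
    · exact le_trans (Set.ncard_insert_le _ _) (by simp)
  -- degree one means f v = g v
  have hdeg1 : ∀ v, Nat.card (H.neighborSet v) = 1 → f v = g v := by
    intro v hv
    by_contra hne
    rw [hnbr v, Nat.card_coe_set_eq, Set.ncard_pair hne] at hv
    omega
  -- walk closure
  have closure : ∀ (S : Set V), (∀ a ∈ S, ∀ b, H.Adj a b → b ∈ S) →
      ∀ a b, H.Walk a b → a ∈ S → b ∈ S := by
    intro S hS a b p
    induction p with
    | nil => exact id
    | cons h _ ih => intro ha; exact ih (hS _ ha _ h)
  -- component of a degree-1 vertex has exactly two vertices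
  have hcomp : ∀ (c : H.ConnectedComponent) (u : V), u ∈ c.supp →
      Nat.card (H.neighborSet u) = 1 → Nat.card c.supp = 2 := by
    intro c u hu hdu
    have hfu := hdeg1 u hdu
    have hffu : f (f u) = u := by rw [hfu, hfg]
    have hc : c = H.connectedComponentMk u := (ConnectedComponent.mem_supp_iff c u).mp hu |>.symm
    have hSclosed : ∀ a ∈ ({u, f u} : Set V), ∀ b, H.Adj a b → b ∈ ({u, f u} : Set V) := by
      rintro a (rfl | rfl) b hab
      · rcases ((hadj _ _).mp hab).2 with h | h
        · exact Or.inr h.symm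
        · exact Or.inr (hinj (h.trans hffu.symm))
      · rcases ((hadj _ _).mp hab).2 with h | h
        · exact Or.inl (h.symm.trans hffu)
        · exact Or.inl (hinj h)
    have hsupp : c.supp = {u, f u} := by
      ext w
      rw [hc, ConnectedComponent.mem_supp_iff, ConnectedComponent.eq]
      constructor
      · intro hr
        obtain ⟨p⟩ := hr.symm
        exact closure _ hSclosed u w p (Or.inl rfl)
      · rintro (rfl | rfl)
        · exact Reachable.refl w
        · exact (((hadj u (f u)).mpr ⟨Ne.symm (hfne u), Or.inl rfl⟩).symm).reachable
    rw [hsupp, Nat.card_coe_set_eq, Set.ncard_pair (Ne.symm (hfne u))]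
  refine ⟨H, ?_, hcard, ?_⟩
  · -- H ≤ G
    intro a b hab
    rcases ((hadj a b).mp hab).2 with h | h
    · exact h ▸ hadjf a
    · exact (h ▸ hadjf b).symm
  · -- odd components
    intro c hodd x y hx _ _ hdx _
    exact absurd hodd (by rw [hcomp c x hx hdx]; decide)
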